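/- Let (G, C) be a complete reflection framework for B and d_1, …, d_n. Then for every vertex v of G and every edge e incident to v, the vector C(v, e) is a real root: C(v, e) ∈ Φ. -/

import Mathlib

open Finset in
/-- The (nonsymmetric) Euler form `E` on `ℝ^n`: `E(αᵢ, αᵢ) = dᵢ` and
`E(αᵢ, αⱼ) = dᵢ · min(Bᵢⱼ, 0)` for `i ≠ j`. -/
def eulerForm {n : ℕ} (B : Matrix (Fin n) (Fin n) ℤ) (d : Fin n → ℤ)
    (x y : Fin n → ℝ) : ℝ :=
  ∑ i : Fin n, ∑ j : Fin n,
    x i * y j * (if i = j then (d i : ℝ) else (d i : ℝ) * min (B i j : ℝ) 0)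

/-- The symmetrized form `(β, γ) = E(β, γ) + E(γ, β)`. -/
def symForm {n : ℕ} (B : Matrix (Fin n) (Fin n) ℤ) (d : Fin n → ℤ)
    (x y : Fin n → ℝ) : ℝ :=
  eulerForm B d x y + eulerForm B d y x

/-- The skew-symmetrized form `ω(β, γ) = E(β, γ) − E(γ, β)`. -/
def omegaForm {n : ℕ} (B : Matrix (Fin n) (Fin n) ℤ) (d : Fin n → ℤ)
    (x y : Fin n → ℝ) : ℝ :=
  eulerForm B d x y - eulerForm B d y x

/-- The simple root `αᵢ`, i.e. the `i`-th standard basis vector of `ℝ^n`. -/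
def simpleRoot {n : ℕ} (i : Fin n) : Fin n → ℝ :=
  fun k => if k = i then 1 else 0

/-- The reflection `t_β : γ ↦ γ − (2(β, γ)/(β, β))·β`, as a self-map of `ℝ^n`. -/
noncomputable def reflTo {n : ℕ} (B : Matrix (Fin n) (Fin n) ℤ) (d : Fin n → ℤ)
    (β : Fin n → ℝ) : Function.End (Fin n → ℝ) :=
  fun γ => γ - (2 * symForm B d β γ / symForm B d β β) • β

/-- The simple reflection `sᵢ = t_{αᵢ}`. -/
noncomputable def simpleRefl {n : ℕ} (B : Matrix (Fin n) (Fin n) ℤ) (d : Fin n → ℤ)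
    (i : Fin n) : Function.End (Fin n → ℝ) :=
  reflTo B d (simpleRoot i)

/-- The Coxeter group `W`: the submonoid of `End(ℝ^n)` generated by the simple
reflections `s₁, …, s_n` (since each `sᵢ` is an involution, this is the subgroup
they generate). -/
def coxeterW {n : ℕ} (B : Matrix (Fin n) (Fin n) ℤ) (d : Fin n → ℤ) :
    Submonoid (Function.End (Fin n → ℝ)) :=
  Submonoid.closure (Set.range (simpleRefl B d))

/-- The set `Φ` of real roots: the vectors `w(αᵢ)` for `w ∈ W` and `1 ≤ i ≤ n`. -/
def realRoots {n : ℕ} (B : Matrix (Fin n) (Fin n) ℤ) (d : Fin n → ℤ) :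
    Set (Fin n → ℝ) :=
  {x | ∃ w ∈ coxeterW B d, ∃ i : Fin n, x = w (simpleRoot i)}

/-- A vector is positive if all of its coordinates are `≥ 0`. -/
def isPosVec {n : ℕ} (x : Fin n → ℝ) : Prop := ∀ k, 0 ≤ x k

/-- A vector is negative if all of its coordinates are `≤ 0`. -/
def isNegVec {n : ℕ} (x : Fin n → ℝ) : Prop := ∀ k, x k ≤ 0

/-- The Coxeter element `s₁ s₂ ⋯ s_n` (product in `End(ℝ^n)`, i.e. composition). -/
noncomputable def coxeterElt {n : ℕ} (B : Matrix (Fin n) (Fin n) ℤ) (d : Fin n → ℤ) :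
    Function.End (Fin n → ℝ) :=
  ((List.finRange n).map (simpleRefl B d)).prod

/-- The image of an integer vector in `ℝ^n`. -/
def toRealVec {n : ℕ} (x : Fin n → ℤ) : Fin n → ℝ := fun i => (x i : ℝ)

/-- Conditions (1)–(3) of Theorem `characterize` for a tuple of integer vectors:
(1) each vector is a real root; (2) the symmetrized form is `≤ 0` on pairs of distinct
vectors which are both positive or both negative; (3) some ordering puts all positive
roots before all negative roots and makes the product of the corresponding reflections
equal to `s₁ s₂ ⋯ s_n`. -/
def cVectorConditions {n : ℕ} (B : Matrix (Fin n) (Fin n) ℤ) (d : Fin n → ℤ)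
    (vs : Fin n → (Fin n → ℤ)) : Prop :=
  (∀ i, toRealVec (vs i) ∈ realRoots B d) ∧
  (∀ i j, i ≠ j →
    ((isPosVec (toRealVec (vs i)) ∧ isPosVec (toRealVec (vs j))) ∨
      (isNegVec (toRealVec (vs i)) ∧ isNegVec (toRealVec (vs j)))) →
    symForm B d (toRealVec (vs i)) (toRealVec (vs j)) ≤ 0) ∧
  (∃ σ : Equiv.Perm (Fin n),
    (∀ i j : Fin n, isPosVec (toRealVec (vs (σ i))) →
      isNegVec (toRealVec (vs (σ j))) → i < j) ∧
    ((List.finRange n).map (fun i => reflTo B d (toRealVec (vs (σ i))))).prod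
      = coxeterElt B d)

/-- A complete reflection framework for `B` and `d`: a connected `n`-regular simple
graph `G` together with an assignment `C(v, e) ∈ ℝ^n` for each vertex `v` and edge
`e ∋ v` (encoded as `C v w` for `w` a neighbour of `v`), satisfying the Base,
Reflection and Euler conditions. -/
structure CompleteReflectionFramework {n : ℕ}
    (B : Matrix (Fin n) (Fin n) ℤ) (d : Fin n → ℤ) where
  /-- The vertex set of the graph `G`. -/
  Vert : Type
  /-- The graph `G`. -/
  G : SimpleGraph Vert
  /-- `G` is connected. -/
  connected : G.Connected
  /-- `G` is `n`-regular. -/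
  regular : ∀ v : Vert, (G.neighborSet v).ncard = n
  /-- The vector `C(v, e)`, where `e` is the edge joining `v` to a neighbour `w`. -/
  C : Vert → Vert → (Fin n → ℝ)
  /-- Base condition: at some vertex `v_b`, the set `C(v_b)` is the set of simple
  roots. -/
  base : ∃ vb : Vert,
    {x | ∃ w, G.Adj vb w ∧ C vb w = x} = {x | ∃ i : Fin n, x = simpleRoot i}
  /-- Reflection condition, first part: `C(v′, e) = −C(v, e)` for an edge `e`
  joining `v` and `v′`. -/
  reflection_neg : ∀ v v' : Vert, G.Adj v v' → C v' v = -(C v v')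
  /-- Reflection condition, second part: for any other edge `f ∋ v` with
  `γ = C(v, f)`, the set `C(v′)` contains `t_β(γ)` if `ω(β, γ) ≥ 0` and contains `γ`
  if `ω(β, γ) < 0`, where `β = C(v, e)`. -/
  reflection : ∀ v v' w : Vert, G.Adj v v' → G.Adj v w → w ≠ v' →
    (0 ≤ omegaForm B d (C v v') (C v w) →
      ∃ u, G.Adj v' u ∧ C v' u = reflTo B d (C v v') (C v w)) ∧
    (omegaForm B d (C v v') (C v w) < 0 →
      ∃ u, G.Adj v' u ∧ C v' u = C v w)
  /-- Euler condition (E1): `E(β, γ) = 0` for `β ∈ C₊(v)` and `γ ∈ C₋(v)`. -/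
  euler1 : ∀ v w w' : Vert, G.Adj v w → G.Adj v w' →
    isPosVec (C v w) → isNegVec (C v w') → eulerForm B d (C v w) (C v w') = 0
  /-- Euler condition (E2): `E(β, γ) ≤ 0` for distinct `β, γ ∈ C(v)` which are both
  positive or both negative. -/
  euler2 : ∀ v w w' : Vert, G.Adj v w → G.Adj v w' → C v w ≠ C v w' →
    ((isPosVec (C v w) ∧ isPosVec (C v w')) ∨
      (isNegVec (C v w) ∧ isNegVec (C v w'))) →
    eulerForm B d (C v w) (C v w') ≤ 0
  /-- Euler condition (E3): the directed graph on `C(v)` with an arrow `β → γ`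
  whenever `β ≠ γ` and `E(β, γ) ≠ 0` has no directed cycle. -/
  euler3 : ∀ (v : Vert) (β : Fin n → ℝ), ¬ Relation.TransGen
    (fun x y : Fin n → ℝ => x ≠ y ∧ (∃ w, G.Adj v w ∧ C v w = x) ∧
      (∃ w, G.Adj v w ∧ C v w = y) ∧ eulerForm B d x y ≠ 0) β β


section Aux
variable {n : ℕ} (B : Matrix (Fin n) (Fin n) ℤ) (d : Fin n → ℤ)

lemma eulerForm_add_right (x y z : Fin n → ℝ) :
    eulerForm B d x (y + z) = eulerForm B d x y + eulerForm B d x z := by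
  simp only [eulerForm, Pi.add_apply, ← Finset.sum_add_distrib]
  congr 1; ext i; congr 1; ext j; ring

lemma eulerForm_smul_right (c : ℝ) (x y : Fin n → ℝ) :
    eulerForm B d x (c • y) = c * eulerForm B d x y := by
  simp only [eulerForm, Pi.smul_apply, smul_eq_mul, Finset.mul_sum]
  congr 1; ext i; congr 1; ext j; ring

lemma eulerForm_add_left (x y z : Fin n → ℝ) :
    eulerForm B d (x + y) z = eulerForm B d x z + eulerForm B d y z := by
  simp only [eulerForm, Pi.add_apply, ← Finset.sum_add_distrib]
  congr 1; ext i; congr 1; ext j; ring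

lemma eulerForm_smul_left (c : ℝ) (x y : Fin n → ℝ) :
    eulerForm B d (c • x) y = c * eulerForm B d x y := by
  simp only [eulerForm, Pi.smul_apply, smul_eq_mul, Finset.mul_sum]
  congr 1; ext i; congr 1; ext j; ring

lemma eulerForm_sub_right (x y z : Fin n → ℝ) :
    eulerForm B d x (y - z) = eulerForm B d x y - eulerForm B d x z := by
  have : y - z = y + (-1 : ℝ) • z := by ext k; simp; ring
  rw [this, eulerForm_add_right, eulerForm_smul_right]; ring

lemma eulerForm_sub_left (x y z : Fin n → ℝ) :
    eulerForm B d (x - y) z = eulerForm B d x z - eulerForm B d y z := by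
  have : x - y = x + (-1 : ℝ) • y := by ext k; simp; ring
  rw [this, eulerForm_add_left, eulerForm_smul_left]; ring

lemma eulerForm_neg_right (x y : Fin n → ℝ) :
    eulerForm B d x (-y) = -eulerForm B d x y := by
  have : -y = (0 : Fin n → ℝ) - y := by ext k; simp
  rw [this, eulerForm_sub_right]
  have h0 : eulerForm B d x (0 : Fin n → ℝ) = 0 := by simp [eulerForm]
  rw [h0]; ring

lemma eulerForm_neg_left (x y : Fin n → ℝ) :
    eulerForm B d (-x) y = -eulerForm B d x y := by
  have : -x = (0 : Fin n → ℝ) - x := by ext k; simp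
  rw [this, eulerForm_sub_left]
  have h0 : eulerForm B d (0 : Fin n → ℝ) y = 0 := by simp [eulerForm]
  rw [h0]; ring

lemma symForm_comm (x y : Fin n → ℝ) : symForm B d x y = symForm B d y x := by
  simp [symForm]; ring

lemma symForm_sub_right (x y z : Fin n → ℝ) :
    symForm B d x (y - z) = symForm B d x y - symForm B d x z := by
  simp [symForm, eulerForm_sub_right, eulerForm_sub_left]; ring

lemma symForm_add_right (x y z : Fin n → ℝ) :
    symForm B d x (y + z) = symForm B d x y + symForm B d x z := by
  simp [symForm, eulerForm_add_right, eulerForm_add_left]; ring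

lemma symForm_smul_right (c : ℝ) (x y : Fin n → ℝ) :
    symForm B d x (c • y) = c * symForm B d x y := by
  simp [symForm, eulerForm_smul_right, eulerForm_smul_left]; ring

lemma symForm_sub_left (x y z : Fin n → ℝ) :
    symForm B d (x - y) z = symForm B d x z - symForm B d y z := by
  rw [symForm_comm, symForm_sub_right, symForm_comm B d z x, symForm_comm B d z y]

lemma symForm_smul_left (c : ℝ) (x y : Fin n → ℝ) :
    symForm B d (c • x) y = c * symForm B d x y := by
  rw [symForm_comm, symForm_smul_right, symForm_comm]

lemma symForm_neg_right (x y : Fin n → ℝ) :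
    symForm B d x (-y) = -symForm B d x y := by
  simp [symForm, eulerForm_neg_right, eulerForm_neg_left]; ring

lemma omegaForm_sub_right (x y z : Fin n → ℝ) :
    omegaForm B d x (y - z) = omegaForm B d x y - omegaForm B d x z := by
  simp [omegaForm, eulerForm_sub_right, eulerForm_sub_left]; ring

lemma omegaForm_smul_right (c : ℝ) (x y : Fin n → ℝ) :
    omegaForm B d x (c • y) = c * omegaForm B d x y := by
  simp [omegaForm, eulerForm_smul_right, eulerForm_smul_left]; ring

lemma omegaForm_self (x : Fin n → ℝ) : omegaForm B d x x = 0 := by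
  simp [omegaForm]

lemma omegaForm_neg_right (x y : Fin n → ℝ) :
    omegaForm B d x (-y) = -omegaForm B d x y := by
  simp [omegaForm, eulerForm_neg_right, eulerForm_neg_left]; ring

lemma eulerForm_simpleRoot_self (i : Fin n) :
    eulerForm B d (simpleRoot i) (simpleRoot i) = (d i : ℝ) := by
  have : ∀ a b : Fin n, simpleRoot i a * simpleRoot i b *
      (if a = b then (d a : ℝ) else (d a : ℝ) * min (B a b : ℝ) 0)
      = if a = i then (if b = i then (d i : ℝ) else 0) else 0 := by
    intro a b
    by_cases ha : a = i <;> by_cases hb : b = i <;> simp [simpleRoot, ha, hb]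
  simp only [eulerForm, this]
  simp

lemma symForm_simpleRoot_self (i : Fin n) :
    symForm B d (simpleRoot i) (simpleRoot i) = 2 * (d i : ℝ) := by
  simp [symForm, eulerForm_simpleRoot_self]; ring

end Aux

section Refl
variable {n : ℕ} (B : Matrix (Fin n) (Fin n) ℤ) (d : Fin n → ℤ)

lemma reflTo_apply (β γ : Fin n → ℝ) :
    reflTo B d β γ = γ - (2 * symForm B d β γ / symForm B d β β) • β := rfl

lemma reflTo_add (β x y : Fin n → ℝ) :
    reflTo B d β (x + y) = reflTo B d β x + reflTo B d β y := by
  simp only [reflTo_apply, symForm_add_right]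
  ext k
  simp [add_div, add_smul]
  ring

lemma reflTo_smul (β : Fin n → ℝ) (c : ℝ) (x : Fin n → ℝ) :
    reflTo B d β (c • x) = c • reflTo B d β x := by
  simp only [reflTo_apply, symForm_smul_right]
  ext k
  simp [mul_div_assoc]
  ring

lemma reflTo_isLinear (β : Fin n → ℝ) : IsLinearMap ℝ (reflTo B d β) :=
  ⟨reflTo_add B d β, fun c x => reflTo_smul B d β c x⟩

lemma symForm_reflTo_right (β γ : Fin n → ℝ) :
    symForm B d β (reflTo B d β γ)
      = symForm B d β γ - (2 * symForm B d β γ / symForm B d β β) * symForm B d β β := by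
  rw [reflTo_apply, symForm_sub_right, symForm_smul_right]

lemma reflTo_involutive (β : Fin n → ℝ) (hβ : symForm B d β β ≠ 0) (γ : Fin n → ℝ) :
    reflTo B d β (reflTo B d β γ) = γ := by
  rw [reflTo_apply B d β (reflTo B d β γ), symForm_reflTo_right]
  rw [reflTo_apply]
  have hc : 2 * (symForm B d β γ - 2 * symForm B d β γ / symForm B d β β * symForm B d β β)
      / symForm B d β β = -(2 * symForm B d β γ / symForm B d β β) := by
    field_simp; ring
  rw [hc]
  ext k
  simp

lemma reflTo_isometry (β : Fin n → ℝ) (hβ : symForm B d β β ≠ 0) (x y : Fin n → ℝ) :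
    symForm B d (reflTo B d β x) (reflTo B d β y) = symForm B d x y := by
  simp only [reflTo_apply, symForm_sub_right, symForm_sub_left, symForm_smul_right,
    symForm_smul_left]
  rw [symForm_comm B d β x]
  field_simp
  ring

lemma omegaForm_reflTo_right (β γ : Fin n → ℝ) :
    omegaForm B d β (reflTo B d β γ) = omegaForm B d β γ := by
  rw [reflTo_apply, omegaForm_sub_right, omegaForm_smul_right, omegaForm_self]
  simp

lemma reflTo_neg_self (β : Fin n → ℝ) (hβ : symForm B d β β ≠ 0) :
    reflTo B d β (-β) = β := by
  rw [reflTo_apply, symForm_neg_right]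
  have : 2 * -symForm B d β β / symForm B d β β = -2 := by field_simp
  rw [this]
  ext k; simp; ring

lemma reflTo_self (β : Fin n → ℝ) (hβ : symForm B d β β ≠ 0) :
    reflTo B d β β = -β := by
  rw [reflTo_apply]
  have : 2 * symForm B d β β / symForm B d β β = 2 := by field_simp
  rw [this]
  ext k; simp; ring

end Refl

section W
variable {n : ℕ} (B : Matrix (Fin n) (Fin n) ℤ) (d : Fin n → ℤ)

/-- The key properties carried by every element of `W`. -/
def goodW (B : Matrix (Fin n) (Fin n) ℤ) (d : Fin n → ℤ)
    (w : Function.End (Fin n → ℝ)) : Prop :=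
  IsLinearMap ℝ w ∧ (∀ x y, symForm B d (w x) (w y) = symForm B d x y) ∧
    ∃ w' ∈ coxeterW B d, w * w' = 1 ∧ w' * w = 1

lemma symForm_simpleRoot_ne (hd : ∀ i, 0 < d i) (i : Fin n) :
    symForm B d (simpleRoot i) (simpleRoot i) ≠ 0 := by
  rw [symForm_simpleRoot_self]
  have := hd i
  positivity

lemma simpleRefl_mem (i : Fin n) : simpleRefl B d i ∈ coxeterW B d :=
  Submonoid.subset_closure ⟨i, rfl⟩

lemma simpleRefl_invol (hd : ∀ i, 0 < d i) (i : Fin n) :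
    simpleRefl B d i * simpleRefl B d i = 1 := by
  funext γ
  exact reflTo_involutive B d _ (symForm_simpleRoot_ne B d hd i) γ

lemma goodW_of_mem (hd : ∀ i, 0 < d i) {w : Function.End (Fin n → ℝ)}
    (hw : w ∈ coxeterW B d) : goodW B d w := by
  induction hw using Submonoid.closure_induction with
  | mem x hx =>
    obtain ⟨i, rfl⟩ := hx
    refine ⟨reflTo_isLinear B d _, fun x y =>
      reflTo_isometry B d _ (symForm_simpleRoot_ne B d hd i) x y,
      simpleRefl B d i, simpleRefl_mem B d i, simpleRefl_invol B d hd i,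
      simpleRefl_invol B d hd i⟩
  | one =>
    exact ⟨⟨fun x y => rfl, fun c x => rfl⟩, fun x y => rfl, 1, one_mem _, one_mul 1, one_mul 1⟩
  | mul x y hx hy ihx ihy =>
    obtain ⟨hlx, hix, x', hx', hxx', hx'x⟩ := ihx
    obtain ⟨hly, hiy, y', hy', hyy', hy'y⟩ := ihy
    refine ⟨?_, ?_, y' * x', mul_mem hy' hx', ?_, ?_⟩
    · exact ⟨fun a b => by
        show x (y (a + b)) = x (y a) + x (y b)
        rw [hly.map_add, hlx.map_add], fun c a => by
        show x (y (c • a)) = c • x (y a)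
        rw [hly.map_smul, hlx.map_smul]⟩
    · intro a b
      show symForm B d (x (y a)) (x (y b)) = _
      rw [hix, hiy]
    · rw [mul_assoc, ← mul_assoc y y', hyy', one_mul, hxx']
    · rw [mul_assoc, ← mul_assoc x', hx'x, one_mul, hy'y]

end W

section Roots
variable {n : ℕ} (B : Matrix (Fin n) (Fin n) ℤ) (d : Fin n → ℤ)

lemma simpleRoot_mem_realRoots (i : Fin n) : simpleRoot i ∈ realRoots B d :=
  ⟨1, one_mem _, i, rfl⟩

lemma symForm_self_pos_of_root (hd : ∀ i, 0 < d i) {β : Fin n → ℝ}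
    (hβ : β ∈ realRoots B d) : 0 < symForm B d β β := by
  obtain ⟨w, hw, i, rfl⟩ := hβ
  obtain ⟨-, hiso, -⟩ := goodW_of_mem B d hd hw
  rw [hiso, symForm_simpleRoot_self]
  have := hd i
  positivity

lemma symForm_self_ne_of_root (hd : ∀ i, 0 < d i) {β : Fin n → ℝ}
    (hβ : β ∈ realRoots B d) : symForm B d β β ≠ 0 :=
  ne_of_gt (symForm_self_pos_of_root B d hd hβ)

lemma neg_mem_realRoots (hd : ∀ i, 0 < d i) {β : Fin n → ℝ}
    (hβ : β ∈ realRoots B d) : -β ∈ realRoots B d := by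
  obtain ⟨w, hw, i, rfl⟩ := hβ
  obtain ⟨hlin, -, -⟩ := goodW_of_mem B d hd hw
  refine ⟨w * simpleRefl B d i, mul_mem hw (simpleRefl_mem B d i), i, ?_⟩
  show -w (simpleRoot i) = w (simpleRefl B d i (simpleRoot i))
  rw [show simpleRefl B d i (simpleRoot i) = -(simpleRoot i) from
    reflTo_self B d _ (symForm_simpleRoot_ne B d hd i), hlin.map_neg]

lemma reflTo_mem_realRoots (hd : ∀ i, 0 < d i) {β γ : Fin n → ℝ}
    (hβ : β ∈ realRoots B d) (hγ : γ ∈ realRoots B d) :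
    reflTo B d β γ ∈ realRoots B d := by
  obtain ⟨w, hw, i, rfl⟩ := hβ
  obtain ⟨hlin, hiso, w', hw', hww', hw'w⟩ := goodW_of_mem B d hd hw
  obtain ⟨u, hu, j, rfl⟩ := hγ
  set β := w (simpleRoot i) with hβdef
  set γ := u (simpleRoot j) with hγdef
  have happ : ∀ δ, w (w' δ) = δ := fun δ => congrFun hww' δ
  have hkey : reflTo B d β γ = w (simpleRefl B d i (w' γ)) := by
    have h1 : symForm B d β β = 2 * (d i : ℝ) := by
      rw [hβdef, hiso, symForm_simpleRoot_self]
    have h2 : symForm B d β γ = symForm B d (simpleRoot i) (w' γ) := by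
      conv_lhs => rw [show γ = w (w' γ) from (happ γ).symm]
      rw [hβdef, hiso]
    rw [reflTo_apply, h1, h2]
    rw [show simpleRefl B d i (w' γ) = w' γ - (2 * symForm B d (simpleRoot i) (w' γ) /
      (2 * (d i : ℝ))) • simpleRoot i by
        rw [simpleRefl, reflTo_apply, symForm_simpleRoot_self]]
    rw [hlin.map_sub, hlin.map_smul, happ γ]
  rw [hkey]
  refine ⟨w * simpleRefl B d i * w' * u,
    mul_mem (mul_mem (mul_mem hw (simpleRefl_mem B d i)) hw') hu, j, rfl⟩

end Roots

section Counting
variable {n : ℕ} {B : Matrix (Fin n) (Fin n) ℤ} {d : Fin n → ℤ}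

lemma simpleRoot_injective : Function.Injective (simpleRoot (n := n)) := by
  intro i j hij
  by_contra hne
  have := congrFun hij i
  simp [simpleRoot, hne] at this

lemma ncard_range_simpleRoot : (Set.range (simpleRoot (n := n))).ncard = n := by
  rw [← Set.image_univ, Set.ncard_image_of_injOn simpleRoot_injective.injOn,
    Set.ncard_univ, Nat.card_eq_fintype_card, Fintype.card_fin]

lemma counting (hn : 1 ≤ n) (F : CompleteReflectionFramework B d) (v' : F.Vert)
    (S : Set (Fin n → ℝ)) (hS : S.ncard = n)
    (hsub : S ⊆ {x | ∃ u, F.G.Adj v' u ∧ F.C v' u = x}) :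
    (∀ u, F.G.Adj v' u → F.C v' u ∈ S) ∧
    (∀ u₁ u₂, F.G.Adj v' u₁ → F.G.Adj v' u₂ → F.C v' u₁ = F.C v' u₂ → u₁ = u₂) := by
  have hNfin : (F.G.neighborSet v').Finite := by
    apply Set.finite_of_ncard_ne_zero
    rw [F.regular v']; omega
  have hTeq : {x | ∃ u, F.G.Adj v' u ∧ F.C v' u = x} = F.C v' '' (F.G.neighborSet v') := by
    ext x
    constructor
    · rintro ⟨u, hu, rfl⟩; exact ⟨u, hu, rfl⟩
    · rintro ⟨u, hu, rfl⟩; exact ⟨u, hu, rfl⟩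
  set T := {x | ∃ u, F.G.Adj v' u ∧ F.C v' u = x} with hT
  have hTfin : T.Finite := by rw [hTeq]; exact hNfin.image _
  have hTle : T.ncard ≤ n := by
    rw [hTeq]
    calc (F.C v' '' (F.G.neighborSet v')).ncard ≤ (F.G.neighborSet v').ncard :=
          Set.ncard_image_le hNfin
      _ = n := F.regular v'
  have hST : S = T := Set.eq_of_subset_of_ncard_le hsub (by omega) hTfin
  constructor
  · intro u hu
    rw [hST]; exact ⟨u, hu, rfl⟩
  · intro u₁ u₂ h₁ h₂ heq
    by_contra hne
    have hsub2 : T ⊆ F.C v' '' (F.G.neighborSet v' \ {u₂}) := by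
      rintro x ⟨u, hu, rfl⟩
      by_cases hu2 : u = u₂
      · exact ⟨u₁, ⟨h₁, by simp [hne]⟩, by rw [heq, hu2]⟩
      · exact ⟨u, ⟨hu, by simp [hu2]⟩, rfl⟩
    have hle2 : T.ncard ≤ n - 1 := by
      calc T.ncard ≤ (F.C v' '' (F.G.neighborSet v' \ {u₂})).ncard :=
            Set.ncard_le_ncard hsub2 (hNfin.diff.image _)
        _ ≤ (F.G.neighborSet v' \ {u₂}).ncard := Set.ncard_image_le hNfin.diff
        _ = n - 1 := by rw [Set.ncard_diff_singleton_of_mem (show u₂ ∈ F.G.neighborSet v' from h₂), F.regular v']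
    have hTn : T.ncard = n := by rw [← hST, hS]
    omega

end Counting

section Main
variable {n : ℕ} {B : Matrix (Fin n) (Fin n) ℤ} {d : Fin n → ℤ}

/-- The inductive invariant: all vectors at `v` are real roots, and distinct
edges at `v` carry distinct vectors. -/
def goodVert (F : CompleteReflectionFramework B d) (v : F.Vert) : Prop :=
  (∀ u, F.G.Adj v u → F.C v u ∈ realRoots B d) ∧
  (∀ u₁ u₂, F.G.Adj v u₁ → F.G.Adj v u₂ → F.C v u₁ = F.C v u₂ → u₁ = u₂)

lemma goodVert_base (hn : 1 ≤ n) (F : CompleteReflectionFramework B d)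
    (vb : F.Vert)
    (hb : {x | ∃ w, F.G.Adj vb w ∧ F.C vb w = x} = {x | ∃ i : Fin n, x = simpleRoot i}) :
    goodVert F vb := by
  have hrange : {x : Fin n → ℝ | ∃ i : Fin n, x = simpleRoot i}
      = Set.range (simpleRoot (n := n)) := by
    ext x; simp [Set.range, eq_comm]
  have h := counting hn F vb (Set.range (simpleRoot (n := n)))
    ncard_range_simpleRoot (by rw [hb, hrange])
  refine ⟨fun u hu => ?_, h.2⟩
  obtain ⟨i, hi⟩ := h.1 u hu
  rw [← hi]
  exact simpleRoot_mem_realRoots B d i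

lemma goodVert_step (hn : 1 ≤ n) (hd : ∀ i, 0 < d i)
    (F : CompleteReflectionFramework B d) (v v' : F.Vert) (hadj : F.G.Adj v v')
    (hv : goodVert F v) : goodVert F v' := by
  classical
  obtain ⟨hroot, hinj⟩ := hv
  set β := F.C v v' with hβdef
  have hβ : β ∈ realRoots B d := hroot v' hadj
  have hβne : symForm B d β β ≠ 0 := symForm_self_ne_of_root B d hd hβ
  set img : F.Vert → (Fin n → ℝ) := fun u =>
    if 0 ≤ omegaForm B d β (F.C v u) then reflTo B d β (F.C v u) else F.C v u with himg
  have hNfin : (F.G.neighborSet v).Finite := by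
    apply Set.finite_of_ncard_ne_zero
    rw [F.regular v]; omega
  set S : Set (Fin n → ℝ) := insert (-β) (img '' (F.G.neighborSet v \ {v'})) with hSdef
  -- injectivity of img on N \ {v'}
  have hinjOn : Set.InjOn img (F.G.neighborSet v \ {v'}) := by
    rintro u₁ ⟨hu₁, -⟩ u₂ ⟨hu₂, -⟩ heq
    simp only [himg] at heq
    split_ifs at heq with h₁ h₂ h₂
    · have := reflTo_involutive B d β hβne (F.C v u₁)
      rw [heq, reflTo_involutive B d β hβne] at this
      exact hinj u₁ u₂ hu₁ hu₂ this.symm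
    · exfalso
      apply h₂
      rw [← heq, omegaForm_reflTo_right]
      exact h₁
    · exfalso
      apply h₁
      rw [heq, omegaForm_reflTo_right]
      exact h₂
    · exact hinj u₁ u₂ hu₁ hu₂ heq
  -- -β not in the image
  have hnotmem : -β ∉ img '' (F.G.neighborSet v \ {v'}) := by
    rintro ⟨u, ⟨hu, hune⟩, heq⟩
    simp only [Set.mem_singleton_iff] at hune
    simp only [himg] at heq
    split_ifs at heq with h₁
    · have : F.C v u = β := by
        have := congrArg (reflTo B d β) heq
        rw [reflTo_involutive B d β hβne, reflTo_neg_self B d β hβne] at this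
        exact this
      exact hune (hinj u v' hu hadj (this.trans hβdef))
    · apply h₁
      rw [heq, omegaForm_neg_right, omegaForm_self]
      simp
  have hScard : S.ncard = n := by
    rw [hSdef, Set.ncard_insert_of_notMem hnotmem (hNfin.diff.image _),
      Set.ncard_image_of_injOn hinjOn,
      Set.ncard_diff_singleton_of_mem (show v' ∈ F.G.neighborSet v from hadj), F.regular v]
    omega
  have hSsub : S ⊆ {x | ∃ u, F.G.Adj v' u ∧ F.C v' u = x} := by
    rintro x (rfl | ⟨u, ⟨hu, hune⟩, rfl⟩)
    · exact ⟨v, hadj.symm, F.reflection_neg v v' hadj⟩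
    · simp only [Set.mem_singleton_iff] at hune
      have hrefl := F.reflection v v' u hadj hu hune
      simp only [himg]
      split_ifs with h₁
      · exact hrefl.1 h₁
      · exact hrefl.2 (not_le.mp h₁)
  have hSroots : S ⊆ realRoots B d := by
    rintro x (rfl | ⟨u, ⟨hu, -⟩, rfl⟩)
    · exact neg_mem_realRoots B d hd hβ
    · simp only [himg]
      split_ifs with h₁
      · exact reflTo_mem_realRoots B d hd hβ (hroot u hu)
      · exact hroot u hu
  have h := counting hn F v' S hScard hSsub
  exact ⟨fun u hu => hSroots (h.1 u hu), h.2⟩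

end Main

/-- In a complete reflection framework, every vector `C(v, e)` is a real root. -/
theorem framework_vectors_are_roots (n : ℕ) (hn : 1 ≤ n)
    (B : Matrix (Fin n) (Fin n) ℤ) (d : Fin n → ℤ) (hd : ∀ i, 0 < d i)
    (hskew : ∀ i j, d i * B i j = -(d j * B j i))
    (hacyclic : ∀ i j : Fin n, i < j → 0 ≤ B i j)
    (F : CompleteReflectionFramework B d)
    (v w : F.Vert) (h : F.G.Adj v w) :
    F.C v w ∈ realRoots B d := by
  obtain ⟨vb, hb⟩ := F.base
  have hbase : goodVert F vb := goodVert_base hn F vb hb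
  have key : ∀ (a b : F.Vert), F.G.Walk a b → goodVert F a → goodVert F b := by
    intro a b p
    induction p with
    | nil => exact id
    | cons hadj q ih => exact fun ha => ih (goodVert_step hn hd F _ _ hadj ha)
  obtain ⟨p⟩ := F.connected vb v
  exact (key vb v p hbase).1 w h
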